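/- Let d, s, N be positive natural numbers with s ≤ d, for each i ∈ {1,…,N} let τ_i : Fin s → Fin d be an injection, and assume the ranges of τ_1,…,τ_N cover Fin d. Let t > 0, σ > 0, and m ∈ ℝ^s. Then the function x ↦ ∏_{i=1}^N ∏_{j=1}^s ((2πσ²)^{−1/2} exp(−(x_{τ_i(j)} − m_j)²/(2σ²)))^t is integrable over Fin d → ℝ with respect to Lebesgue measure, and its integral equals ∏_{k=1}^d ∫_ℝ ∏_{(i,j): τ_i(j)=k} ((2πσ²)^{−1/2} exp(−(u − m_j)²/(2σ²)))^t du. -/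

import Mathlib

open MeasureTheory

/-- The one-dimensional Gaussian density with mean `m` and variance `σ²`. -/
noncomputable def gauss1D (σ m u : ℝ) : ℝ :=
  (2 * Real.pi * σ ^ 2) ^ (-(1 : ℝ) / 2) * Real.exp (-(u - m) ^ 2 / (2 * σ ^ 2))

lemma gauss1D_pos {σ : ℝ} (hσ : 0 < σ) (m u : ℝ) : 0 < gauss1D σ m u := by
  have h : 0 < 2 * Real.pi * σ ^ 2 := by positivity
  unfold gauss1D
  positivity

lemma gauss1D_le {σ : ℝ} (hσ : 0 < σ) (m u : ℝ) :
    gauss1D σ m u ≤ (2 * Real.pi * σ ^ 2) ^ (-(1 : ℝ) / 2) := by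
  have h : 0 < 2 * Real.pi * σ ^ 2 := by positivity
  have h1 : Real.exp (-(u - m) ^ 2 / (2 * σ ^ 2)) ≤ 1 := by
    rw [Real.exp_le_one_iff]
    have h2 : (0:ℝ) < 2 * σ ^ 2 := by positivity
    exact div_nonpos_of_nonpos_of_nonneg (neg_nonpos_of_nonneg (sq_nonneg _)) h2.le
  calc gauss1D σ m u ≤ (2 * Real.pi * σ ^ 2) ^ (-(1 : ℝ) / 2) * 1 := by
        exact mul_le_mul_of_nonneg_left h1 (Real.rpow_nonneg h.le _)
    _ = _ := mul_one _

lemma continuous_gauss1D_rpow {σ t : ℝ} (hσ : 0 < σ) (ht : 0 < t) (m : ℝ) :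
    Continuous (fun u => gauss1D σ m u ^ t) := by
  apply Continuous.rpow_const
  · exact continuous_const.mul ((continuous_id.sub continuous_const).pow 2 |>.neg.div_const
      _ |>.rexp)
  · exact fun _ => Or.inr ht.le

lemma integrable_gauss1D_rpow {σ t : ℝ} (hσ : 0 < σ) (ht : 0 < t) (m : ℝ) :
    Integrable (fun u => gauss1D σ m u ^ t) := by
  have h : 0 < 2 * Real.pi * σ ^ 2 := by positivity
  have h2 : (0:ℝ) < 2 * σ ^ 2 := by positivity
  have heq : ∀ u, gauss1D σ m u ^ t =
      ((2 * Real.pi * σ ^ 2) ^ (-(1 : ℝ) / 2)) ^ t *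
        Real.exp (-(t / (2 * σ ^ 2)) * (u - m) ^ 2) := by
    intro u
    unfold gauss1D
    rw [Real.mul_rpow (Real.rpow_nonneg h.le _) (Real.exp_pos _).le, ← Real.exp_mul]
    congr 1
    ring
  simp_rw [heq]
  apply Integrable.const_mul
  have := (integrable_exp_neg_mul_sq (b := t / (2 * σ ^ 2)) (by positivity)).comp_sub_right m
  exact this

lemma integrable_prod_gauss {σ t : ℝ} (hσ : 0 < σ) (ht : 0 < t) {s : ℕ} (m : Fin s → ℝ)
    {ι : Type*} [DecidableEq ι] (S : Finset ι) (c : ι → Fin s) (hS : S.Nonempty) :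
    Integrable (fun u => ∏ p ∈ S, gauss1D σ (m (c p)) u ^ t) := by
  obtain ⟨p₀, hp₀⟩ := hS
  set C : ℝ := (2 * Real.pi * σ ^ 2) ^ (-(1 : ℝ) / 2) with hC
  have hCpos : 0 < C := Real.rpow_pos_of_pos (by positivity) _
  set B : ℝ := (C ^ t) ^ (S.erase p₀).card with hB
  apply Integrable.mono' ((integrable_gauss1D_rpow hσ ht (m (c p₀))).const_mul B)
  · exact (continuous_finset_prod S fun p _ =>
      continuous_gauss1D_rpow hσ ht (m (c p))).aestronglyMeasurable
  · filter_upwards with u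
    have hnn : ∀ p ∈ S, 0 ≤ gauss1D σ (m (c p)) u ^ t := fun p _ =>
      Real.rpow_nonneg (gauss1D_pos hσ _ _).le _
    rw [Real.norm_of_nonneg (Finset.prod_nonneg hnn)]
    rw [← Finset.mul_prod_erase S _ hp₀, mul_comm B]
    apply mul_le_mul_of_nonneg_left _ (hnn p₀ hp₀)
    calc ∏ p ∈ S.erase p₀, gauss1D σ (m (c p)) u ^ t
        ≤ ∏ _p ∈ S.erase p₀, C ^ t := by
          apply Finset.prod_le_prod (fun p hp => hnn p (Finset.mem_of_mem_erase hp))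
          intro p _
          exact Real.rpow_le_rpow (gauss1D_pos hσ _ _).le (gauss1D_le hσ _ _) ht.le
      _ = B := by rw [Finset.prod_const]

/-- with patch-extraction injections `τ i : Fin s → Fin d` whose ranges
cover `Fin d`, the function `x ↦ ∏ i ∏ j (gauss1D σ (m j) (x (τ i j)))^t` is
integrable on `ℝ^d`, and its integral factors over the pixels:
`∏ k ∫_ℝ ∏_{(i,j) : τ i j = k} (gauss1D σ (m j) u)^t du`. -/
theorem stmt_8 (d s N : ℕ) (hd : 0 < d) (hs : 0 < s) (hN : 0 < N) (hsd : s ≤ d)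
    (τ : Fin N → Fin s → Fin d) (hτ : ∀ i, Function.Injective (τ i))
    (hcover : ∀ k : Fin d, ∃ i j, τ i j = k)
    (t σ : ℝ) (ht : 0 < t) (hσ : 0 < σ) (m : Fin s → ℝ) :
    Integrable
        (fun x : Fin d → ℝ => ∏ i : Fin N, ∏ j : Fin s, gauss1D σ (m j) (x (τ i j)) ^ t)
        volume ∧
      (∫ x : Fin d → ℝ, ∏ i : Fin N, ∏ j : Fin s, gauss1D σ (m j) (x (τ i j)) ^ t)
        = ∏ k : Fin d,
            ∫ u : ℝ,
              ∏ p ∈ Finset.univ.filter (fun p : Fin N × Fin s => τ p.1 p.2 = k),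
                gauss1D σ (m p.2) u ^ t := by
  classical
  set f : Fin d → ℝ → ℝ := fun k u =>
    ∏ p ∈ Finset.univ.filter (fun p : Fin N × Fin s => τ p.1 p.2 = k),
      gauss1D σ (m p.2) u ^ t with hf
  have hgroup : ∀ x : Fin d → ℝ,
      (∏ i : Fin N, ∏ j : Fin s, gauss1D σ (m j) (x (τ i j)) ^ t) = ∏ k, f k (x k) := by
    intro x
    rw [← Finset.prod_product', Finset.univ_product_univ]
    rw [← Finset.prod_fiberwise Finset.univ (fun p : Fin N × Fin s => τ p.1 p.2)
      (fun p => gauss1D σ (m p.2) (x (τ p.1 p.2)) ^ t)]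
    apply Finset.prod_congr rfl
    intro k _
    apply Finset.prod_congr rfl
    intro p hp
    rw [Finset.mem_filter] at hp
    rw [hp.2]
  have hint : ∀ k, Integrable (f k) := by
    intro k
    obtain ⟨i, j, hij⟩ := hcover k
    apply integrable_prod_gauss hσ ht m _ (fun p : Fin N × Fin s => p.2)
    exact ⟨(i, j), Finset.mem_filter.mpr ⟨Finset.mem_univ _, hij⟩⟩
  constructor
  · have := Integrable.fintype_prod (f := f) hint
    simp only [← hgroup] at this
    exact this
  · simp_rw [hgroup]
    exact integral_fintype_prod_eq_prod (ι := Fin d) f
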